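/- Let φ : G → H be a rough isometry and ψ : H → G a rough inverse with d_G((ψ∘φ)(g), g) ≤ a(c+b) for all g ∈ G. If f ∈ D_p(G), then |f((ψ∘φ)(g)) − f(g)| → 0 as the word length |g| → ∞. -/

import Mathlib

open Filter Topology

namespace PHB

variable {G : Type*} [Group G]

/-- One Dirichlet term `‖f(gs⁻¹) − f(g)‖^p`. -/
noncomputable def dpTerm (p : ℝ) (f : G → ℂ) (s g : G) : ℝ := ‖f (g * s⁻¹) - f g‖ ^ p

/-- Membership in `D_p(G)`. -/
def MemDp (p : ℝ) (S : Finset G) (f : G → ℂ) : Prop :=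
  ∀ s ∈ S, Summable (dpTerm p f s)

/-- The Dirichlet `p`-sum `∑_{s∈S}∑_{g∈G} ‖f(gs⁻¹) − f(g)‖^p`. -/
noncomputable def dirSum (p : ℝ) (S : Finset G) (f : G → ℂ) : ℝ :=
  ∑ s ∈ S, ∑' g, dpTerm p f s g

/-- The `D_p`-norm `(∑_{s,g}|f(gs⁻¹)−f(g)|^p + |f(e)|^p)^{1/p}`. -/
noncomputable def dpNorm (p : ℝ) (S : Finset G) (f : G → ℂ) : ℝ :=
  (dirSum p S f + ‖f 1‖ ^ p) ^ (1/p)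

/-- The norm on `D_p(G)/ℂ`: `(∑_{s,g}|f(gs⁻¹)−f(g)|^p)^{1/p}`. -/
noncomputable def qNorm (p : ℝ) (S : Finset G) (f : G → ℂ) : ℝ :=
  dirSum p S f ^ (1/p)

/-- Boundedness of a function. -/
def BddFun (f : G → ℂ) : Prop := ∃ M : ℝ, ∀ g, ‖f g‖ ≤ M

/-- The sup norm. -/
noncomputable def supNorm (f : G → ℂ) : ℝ := ⨆ g, ‖f g‖

/-- The `BD_p`-norm `‖f‖_∞ + (∑_{s,g}|f(gs⁻¹)−f(g)|^p)^{1/p}`. -/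
noncomputable def bdpNorm (p : ℝ) (S : Finset G) (f : G → ℂ) : ℝ :=
  supNorm f + dirSum p S f ^ (1/p)

/-- Membership in `BD_p(G)`: bounded and finite Dirichlet `p`-sum. -/
def MemBDp (p : ℝ) (S : Finset G) (f : G → ℂ) : Prop := BddFun f ∧ MemDp p S f

/-- Membership in `ℓ^p(G)`. -/
def MemLp' (p : ℝ) (f : G → ℂ) : Prop := Summable fun g => ‖f g‖ ^ p

/-- `f` lies in the `D_p`-closure of the finitely supported functions `ℂG`. -/
def InClosCG (p : ℝ) (S : Finset G) (f : G → ℂ) : Prop :=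
  MemDp p S f ∧ ∀ ε : ℝ, 0 < ε →
    ∃ h : G → ℂ, (Function.support h).Finite ∧ dpNorm p S (f - h) < ε

/-- `f` is a bounded function in the `D_p`-closure of `ℂG`. -/
def InBClosCG (p : ℝ) (S : Finset G) (f : G → ℂ) : Prop := BddFun f ∧ InClosCG p S f

/-- `f` lies in the `D_p`-closure of `ℓ^p(G)`. -/
def InClosLp (p : ℝ) (S : Finset G) (f : G → ℂ) : Prop :=
  MemDp p S f ∧ ∀ ε : ℝ, 0 < ε →
    ∃ h : G → ℂ, MemLp' p h ∧ dpNorm p S (f - h) < ε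

/-- `f` is a bounded function in the `D_p`-closure of `ℓ^p(G)`. -/
def InBClosLp (p : ℝ) (S : Finset G) (f : G → ℂ) : Prop := BddFun f ∧ InClosLp p S f

/-- `f` lies in the `D_p`-closure of `ℓ^p(G) ⊕ ℂ`. -/
def InClosLpC (p : ℝ) (S : Finset G) (f : G → ℂ) : Prop :=
  MemDp p S f ∧ ∀ ε : ℝ, 0 < ε →
    ∃ (h : G → ℂ) (c : ℂ), MemLp' p h ∧ dpNorm p S (f - h - Function.const G c) < ε

/-- A character (nonzero multiplicative linear functional) on `BD_p(G)`. -/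
structure BDpChar (p : ℝ) (S : Finset G) where
  toFun : {f : G → ℂ // MemBDp p S f} → ℂ
  map_add : ∀ (f h : {f : G → ℂ // MemBDp p S f}) (hm : MemBDp p S (f.1 + h.1)),
    toFun ⟨f.1 + h.1, hm⟩ = toFun f + toFun h
  map_mul : ∀ (f h : {f : G → ℂ // MemBDp p S f}) (hm : MemBDp p S (f.1 * h.1)),
    toFun ⟨f.1 * h.1, hm⟩ = toFun f * toFun h
  map_smul : ∀ (c : ℂ) (f : {f : G → ℂ // MemBDp p S f}) (hm : MemBDp p S (c • f.1)),
    toFun ⟨c • f.1, hm⟩ = c * toFun f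
  map_one : ∀ hm : MemBDp p S (1 : G → ℂ), toFun ⟨1, hm⟩ = 1

/-- The weak-* topology on the spectrum `Sp(BD_p(G))`. -/
noncomputable instance (p : ℝ) (S : Finset G) : TopologicalSpace (BDpChar p S) :=
  TopologicalSpace.induced BDpChar.toFun Pi.topologicalSpace

/-- The evaluation embedding `i : G → Sp(BD_p(G))`, `(i g)(f) = f(g)`. -/
def evalChar (p : ℝ) (S : Finset G) (g : G) : BDpChar p S where
  toFun := fun f => f.1 g
  map_add := fun _ _ _ => rfl
  map_mul := fun _ _ _ => rfl
  map_smul := fun _ _ _ => rfl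
  map_one := fun _ => rfl

/-- The `p`-Laplacian `Δ_p f(g) = ∑_{s∈S} |f(gs⁻¹)−f(g)|^{p−2}(f(gs⁻¹)−f(g))`. -/
noncomputable def pLap (p : ℝ) (S : Finset G) (f : G → ℂ) (g : G) : ℂ :=
  ∑ s ∈ S, ((‖f (g * s⁻¹) - f g‖ ^ (p - 2) : ℝ) : ℂ) * (f (g * s⁻¹) - f g)

/-- `f` is `p`-harmonic: `f ∈ D_p(G)` and `Δ_p f ≡ 0`. -/
def PHarmonic (p : ℝ) (S : Finset G) (f : G → ℂ) : Prop :=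
  MemDp p S f ∧ ∀ g, pLap p S f g = 0

/-- The `p`-harmonic boundary `∂_p(G) ⊆ Sp(BD_p(G)) \ G`. -/
def pBoundary (p : ℝ) (S : Finset G) : Set (BDpChar p S) :=
  {x | (∀ g : G, x ≠ evalChar p S g) ∧
    ∀ (f : G → ℂ) (hf : MemBDp p S f), InBClosCG p S f → x.toFun ⟨f, hf⟩ = 0}

/-- The word metric on `G` with respect to the generating set `S`. -/
noncomputable def wordDist (S : Finset G) (x y : G) : ℕ :=
  sInf {n | ∃ l : List G, (∀ a ∈ l, a ∈ S) ∧ l.length = n ∧ x⁻¹ * y = l.prod}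

/-- The word length `|g| = d(e,g)`. -/
noncomputable def wordLen (S : Finset G) (g : G) : ℕ := wordDist S 1 g

/-- Right translation `f_x(g) = f(gx⁻¹)`. -/
def translateFun (f : G → ℂ) (x : G) : G → ℂ := fun g => f (g * x⁻¹)

/-- `φ : G → H` is a rough isometry with constants `a, b, c` for the word metrics. -/
def RoughIsom {G H : Type*} [Group G] [Group H] (S : Finset G) (T : Finset H)
    (φ : G → H) (a b c : ℝ) : Prop :=
  1 ≤ a ∧ 0 ≤ b ∧ 0 < c ∧
  (∀ x y : G, (1/a) * (wordDist S x y : ℝ) - b ≤ (wordDist T (φ x) (φ y) : ℝ) ∧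
    (wordDist T (φ x) (φ y) : ℝ) ≤ a * (wordDist S x y : ℝ) + b) ∧
  ∀ h : H, ∃ x : G, (wordDist T (φ x) h : ℝ) < c

/-- `S` is a symmetric generating set of `G`. -/
def SymmGen (S : Finset G) : Prop :=
  (∀ s ∈ S, s⁻¹ ∈ S) ∧ Subgroup.closure (S : Set G) = ⊤

end PHB
namespace PHB
variable {G : Type*} [Group G]

lemma exists_word (S : Finset G) (hS : SymmGen S) (x y : G) :
    ∃ l : List G, (∀ a ∈ l, a ∈ S) ∧ x⁻¹ * y = l.prod := by
  have h : x⁻¹ * y ∈ Subgroup.closure (S : Set G) := by rw [hS.2]; trivial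
  refine Subgroup.closure_induction ?_ ?_ ?_ ?_ h
  · intro g hg; exact ⟨[g], by simpa using hg, by simp⟩
  · exact ⟨[], by simp, by simp⟩
  · rintro g h _ _ ⟨l1, hl1, rfl⟩ ⟨l2, hl2, rfl⟩
    refine ⟨l1 ++ l2, ?_, (List.prod_append).symm⟩
    intro a ha
    rcases List.mem_append.mp ha with h | h
    exacts [hl1 a h, hl2 a h]
  · rintro g _ ⟨l, hl, rfl⟩
    refine ⟨(l.map fun x => x⁻¹).reverse, ?_, List.prod_inv_reverse l⟩
    intro a ha
    simp only [List.mem_reverse, List.mem_map] at ha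
    obtain ⟨b, hb, rfl⟩ := ha
    exact hS.1 b (hl b hb)

lemma wordDist_le_of_word (S : Finset G) {x y : G} {l : List G}
    (hl : ∀ a ∈ l, a ∈ S) (hp : x⁻¹ * y = l.prod) :
    wordDist S x y ≤ l.length :=
  Nat.sInf_le ⟨l, hl, rfl, hp⟩

lemma wordDist_spec (S : Finset G) (hS : SymmGen S) (x y : G) :
    ∃ l : List G, (∀ a ∈ l, a ∈ S) ∧ l.length = wordDist S x y ∧ x⁻¹ * y = l.prod := by
  obtain ⟨l, hl, hp⟩ := exists_word S hS x y
  have hne : {n | ∃ l : List G, (∀ a ∈ l, a ∈ S) ∧ l.length = n ∧ x⁻¹ * y = l.prod}.Nonempty :=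
    ⟨l.length, l, hl, rfl, hp⟩
  exact Nat.sInf_mem hne

lemma wordDist_symm_le (S : Finset G) (hS : SymmGen S) (x y : G) :
    wordDist S y x ≤ wordDist S x y := by
  obtain ⟨l, hl, hlen, hprod⟩ := wordDist_spec S hS x y
  have hp2 : y⁻¹ * x = ((l.map fun x => x⁻¹).reverse).prod := by
    rw [← List.prod_inv_reverse, ← hprod]; group
  have := wordDist_le_of_word S (l := (l.map fun x => x⁻¹).reverse)
    (by intro a ha
        simp only [List.mem_reverse, List.mem_map] at ha
        obtain ⟨b, hb, rfl⟩ := ha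
        exact hS.1 b (hl b hb)) hp2
  simpa [hlen] using this

lemma wordDist_triangle (S : Finset G) (hS : SymmGen S) (x y z : G) :
    wordDist S x z ≤ wordDist S x y + wordDist S y z := by
  obtain ⟨l1, h1, len1, p1⟩ := wordDist_spec S hS x y
  obtain ⟨l2, h2, len2, p2⟩ := wordDist_spec S hS y z
  have hp : x⁻¹ * z = (l1 ++ l2).prod := by
    rw [List.prod_append, ← p1, ← p2]; group
  have := wordDist_le_of_word S (l := l1 ++ l2)
    (by intro a ha; rcases List.mem_append.mp ha with h | h; exacts [h1 a h, h2 a h]) hp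
  simpa [len1, len2] using this

lemma tele (S : Finset G) (f : G → ℂ) (ε' : ℝ) (C : Set G)
    (hC : ∀ y ∈ C, ∀ s ∈ S, ‖f (y * s) - f y‖ ≤ ε') :
    ∀ (l : List G), (∀ a ∈ l, a ∈ S) → ∀ x : G,
      (∀ t : List G, t.IsPrefix l → x * t.prod ∈ C) →
      ‖f (x * l.prod) - f x‖ ≤ l.length * ε' := by
  intro l
  induction l with
  | nil => intro _ x _; simp
  | cons s l' ih =>
    intro hl x hx
    have hxC : x ∈ C := by simpa using hx [] List.nil_prefix
    have h1 : ‖f (x * s) - f x‖ ≤ ε' := hC x hxC s (hl s List.mem_cons_self)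
    have h2 : ‖f (x * s * l'.prod) - f (x * s)‖ ≤ l'.length * ε' := by
      refine ih (fun a ha => hl a (List.mem_cons_of_mem _ ha)) (x * s) ?_
      intro t ht
      obtain ⟨r, hr⟩ := ht
      have : x * (s :: t).prod ∈ C := hx (s :: t) ⟨r, by simp [← hr]⟩
      simpa [mul_assoc] using this
    calc ‖f (x * (s :: l').prod) - f x‖
        = ‖(f (x * s * l'.prod) - f (x * s)) + (f (x * s) - f x)‖ := by
          rw [List.prod_cons, ← mul_assoc]; ring_nf
      _ ≤ ‖f (x * s * l'.prod) - f (x * s)‖ + ‖f (x * s) - f x‖ := norm_add_le _ _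
      _ ≤ l'.length * ε' + ε' := add_le_add h2 h1
      _ = (s :: l').length * ε' := by push_cast [List.length_cons]; ring

end PHB

/-- if `ψ` is a rough inverse of the rough isometry `φ` and
`f ∈ D_p(G)`, then `|f(ψ(φ(g))) − f(g)| → 0` as the word length `|g| → ∞`. -/
theorem roughInverse_diff_tendsto_zero {G H : Type*} [Group G] [Infinite G]
    [Group H] [Infinite H] (S : Finset G) (T : Finset H)
    (hS : PHB.SymmGen S) (hT : PHB.SymmGen T) (p : ℝ) (hp : 1 ≤ p)
    (φ : G → H) (ψ : H → G) (a b c : ℝ) (hφ : PHB.RoughIsom S T φ a b c)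
    (hψ : ∀ g : G, (PHB.wordDist S (ψ (φ g)) g : ℝ) ≤ a * (c + b))
    (f : G → ℂ) (hf : PHB.MemDp p S f) :
    Filter.Tendsto (fun g : G => ‖f (ψ (φ g)) - f g‖)
      (Filter.comap (fun g : G => PHB.wordLen S g) Filter.atTop) (nhds 0) := by
  rw [Metric.tendsto_nhds]
  intro ε hε
  set n : ℕ := ⌈a * (c + b)⌉₊ with hn
  set ε' : ℝ := ε / (n + 1) with hε'def
  have hε' : 0 < ε' := by positivity
  have hδ : 0 < ε' ^ p := Real.rpow_pos_of_pos hε' p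
  have hfin : ∀ s ∈ S, {x : G | ε' ^ p ≤ PHB.dpTerm p f s x}.Finite := by
    intro s hs
    have h := (hf s hs).tendsto_cofinite_zero
    have h2 : ∀ᶠ x in Filter.cofinite, PHB.dpTerm p f s x < ε' ^ p :=
      h.eventually (eventually_lt_nhds hδ)
    have h3 := Filter.eventually_cofinite.mp h2
    simpa [not_lt] using h3
  set bad : Set G := ⋃ s ∈ S, {x : G | ε' ^ p ≤ PHB.dpTerm p f s x} with hbad
  have hbadfin : bad.Finite := Set.Finite.biUnion S.finite_toSet hfin
  obtain ⟨M, hM⟩ := (hbadfin.image (PHB.wordLen S)).bddAbove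
  have hgood : ∀ x : G, x ∉ bad → ∀ s ∈ S, ‖f (x * s) - f x‖ ≤ ε' := by
    intro x hx s hs
    have hs' : s⁻¹ ∈ S := hS.1 s hs
    have hnot : ¬ ε' ^ p ≤ PHB.dpTerm p f s⁻¹ x := fun hmem =>
      hx (Set.mem_biUnion hs' hmem)
    push_neg at hnot
    rw [PHB.dpTerm, inv_inv] at hnot
    by_contra hcon
    push_neg at hcon
    have := Real.rpow_le_rpow (z := p) hε'.le hcon.le (by linarith)
    linarith
  have key : ∀ g : G, M + n + 1 ≤ PHB.wordLen S g →
      dist (‖f (ψ (φ g)) - f g‖) 0 < ε := by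
    intro g hg
    have hmn : PHB.wordDist S (ψ (φ g)) g ≤ n := by
      have h1 : (PHB.wordDist S (ψ (φ g)) g : ℝ) ≤ (n : ℝ) :=
        le_trans (hψ g) (Nat.le_ceil _)
      exact_mod_cast h1
    have hmn' : PHB.wordDist S g (ψ (φ g)) ≤ n :=
      le_trans (PHB.wordDist_symm_le S hS _ _) hmn
    obtain ⟨l, hl, hlen, hprod⟩ := PHB.wordDist_spec S hS g (ψ (φ g))
    have hllen : l.length ≤ n := hlen ▸ hmn'
    have hpre : ∀ t : List G, t.IsPrefix l → g * t.prod ∈ badᶜ := by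
      intro t ht
      intro hxbad
      have hxw : PHB.wordLen S (g * t.prod) ≤ M := hM ⟨g * t.prod, hxbad, rfl⟩
      have hdgx : PHB.wordDist S g (g * t.prod) ≤ n := by
        have hw : PHB.wordDist S g (g * t.prod) ≤ t.length :=
          PHB.wordDist_le_of_word S (fun a ha => hl a (ht.subset ha)) (by group)
        exact le_trans hw (le_trans ht.length_le hllen)
      have htri : PHB.wordLen S g ≤ PHB.wordLen S (g * t.prod) +
          PHB.wordDist S (g * t.prod) g := PHB.wordDist_triangle S hS 1 (g * t.prod) g
      have hsym : PHB.wordDist S (g * t.prod) g ≤ n :=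
        le_trans (PHB.wordDist_symm_le S hS _ _) hdgx
      omega
    have hbound := PHB.tele S f ε' badᶜ
      (fun y hy s hs => hgood y hy s hs) l hl g hpre
    have hψφ : ψ (φ g) = g * l.prod := by rw [← hprod]; group
    have hle : ‖f (ψ (φ g)) - f g‖ ≤ (n : ℝ) * ε' := by
      rw [hψφ]
      refine le_trans hbound ?_
      have : (l.length : ℝ) ≤ (n : ℝ) := by exact_mod_cast hllen
      exact mul_le_mul_of_nonneg_right this hε'.le
    have hfinal : (n : ℝ) * ε' < ε := by
      have h1 : (n : ℝ) / (n + 1) < 1 := by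
        rw [div_lt_one (by positivity)]; linarith
      calc (n : ℝ) * (ε / (n + 1)) = ε * ((n : ℝ) / (n + 1)) := by ring
        _ < ε * 1 := by exact mul_lt_mul_of_pos_left h1 hε
        _ = ε := mul_one ε
    rw [Real.dist_eq, sub_zero, abs_of_nonneg (norm_nonneg _)]
    exact lt_of_le_of_lt hle hfinal
  refine Filter.eventually_comap.mpr ?_
  filter_upwards [Filter.eventually_ge_atTop (M + n + 1)] with m hm g hg
  exact key g (by rw [hg]; exact hm)
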